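/- Second-derivative estimates in the smooth case: let T : ℝ² → ℝ be continuously differentiable, nondecreasing in the first variable s, and satisfying T(s,t) = T(t,t) whenever s ≥ t. Assume there are twice continuously differentiable functions T̂₊, T̂₋ : ℝ² → ℝ with T = T̂₊ on {(s,t) : s ≥ t} and T = T̂₋ on {(s,t) : s ≤ t}, and assume the rectangle inequality T(ŝ,t̂) − T(ŝ,t) − T(s,t̂) + T(s,t) ≥ 0 for all s ≤ ŝ and t ≤ t̂. Then the function S(t) := T(t,t) is twice differentiable on ℝ, and for every t ∈ ℝ: (∂²T̂₋/∂t²)(t,t) ≤ S''(t) = (∂²T̂₊/∂t²)(t,t). -/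

import Mathlib

open Set Filter Topology

/-- Helper: for a `C²` function of two variables, extract the first and second partial
derivatives in the second variable, with continuity of the second partial. -/
lemma aux_partials (f : ℝ → ℝ → ℝ) (hf : ContDiff ℝ 2 fun p : ℝ × ℝ => f p.1 p.2) :
    ∃ G H : ℝ → ℝ → ℝ, Continuous (fun p : ℝ × ℝ => H p.1 p.2) ∧
      (∀ s u, HasDerivAt (fun w => f s w) (G s u) u) ∧
      (∀ s u, HasDerivAt (fun w => G s w) (H s u) u) ∧
      (∀ s u, deriv (deriv fun w => f s w) u = H s u) := by
  set F : ℝ × ℝ → ℝ := fun p => f p.1 p.2 with hF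
  have key : ∀ (φ : ℝ × ℝ → ℝ), Differentiable ℝ φ → ∀ s u : ℝ,
      HasDerivAt (fun w => φ (s, w)) (fderiv ℝ φ (s, u) (0, 1)) u := by
    intro φ hφ s u
    exact (hφ (s, u)).hasFDerivAt.comp_hasDerivAt u
      ((hasDerivAt_const u s).prodMk (hasDerivAt_id u))
  set G : ℝ × ℝ → ℝ := fun p => fderiv ℝ F p (0, 1) with hGdef
  have hG : ContDiff ℝ 1 G :=
    (hf.fderiv_right (m := 1) (by norm_num)).clm_apply contDiff_const
  set H : ℝ × ℝ → ℝ := fun p => fderiv ℝ G p (0, 1) with hHdef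
  have hHc : Continuous H :=
    ((hG.fderiv_right (m := 0) (by norm_num)).clm_apply contDiff_const).continuous
  refine ⟨fun s u => G (s, u), fun s u => H (s, u), by simpa using hHc, ?_, ?_, ?_⟩
  · intro s u
    exact key F (hf.differentiable (by norm_num)) s u
  · intro s u
    exact key G (hG.differentiable one_ne_zero) s u
  · intro s u
    have h1 : (deriv fun w => f s w) = fun w => G (s, w) := by
      funext w
      exact (key F (hf.differentiable (by norm_num)) s w).deriv
    rw [h1]
    exact (key G (hG.differentiable one_ne_zero) s u).deriv

/-- Second-derivative estimates in the smooth case: let `T(s,t)` be `C¹`, nondecreasing in `s`,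
with `T(s,t) = T(t,t)` for `s ≥ t`, agreeing with `C²` functions `T̂₊` on `{s ≥ t}` and `T̂₋` on
`{s ≤ t}`, and satisfying the rectangle inequality. Then `S(t) := T(t,t)` is twice
differentiable and `(∂²T̂₋/∂t²)(t,t) ≤ S''(t) = (∂²T̂₊/∂t²)(t,t)` for every `t`. -/
theorem second_derivative_estimates_smooth
    (T Tp Tm : ℝ → ℝ → ℝ)
    (hT : ContDiff ℝ 1 fun p : ℝ × ℝ => T p.1 p.2)
    (hmono : ∀ t, Monotone fun s => T s t)
    (hconst : ∀ s t : ℝ, t ≤ s → T s t = T t t)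
    (hTp : ContDiff ℝ 2 fun p : ℝ × ℝ => Tp p.1 p.2)
    (hTm : ContDiff ℝ 2 fun p : ℝ × ℝ => Tm p.1 p.2)
    (hTpeq : ∀ s t : ℝ, t ≤ s → Tp s t = T s t)
    (hTmeq : ∀ s t : ℝ, s ≤ t → Tm s t = T s t)
    (hrect : ∀ s s' t t' : ℝ, s ≤ s' → t ≤ t' →
      0 ≤ T s' t' - T s' t - T s t' + T s t) :
    ∀ t : ℝ,
      HasDerivAt (deriv fun u => T u u) (deriv (deriv fun w => Tp t w) t) t ∧
      deriv (deriv fun w => Tm t w) t ≤ deriv (deriv fun w => Tp t w) t := by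
  obtain ⟨Gp, Hp, hHpc, hGp, hHp, hderp⟩ := aux_partials Tp hTp
  obtain ⟨Gm, Hm, _, hGm, hHm, hderm⟩ := aux_partials Tm hTm
  -- `Tp a u = T u u` for `u ≤ a`
  have hTpS : ∀ a u : ℝ, u ≤ a → Tp a u = T u u := fun a u h => by
    rw [hTpeq a u h, hconst a u h]
  have hSev : ∀ a t : ℝ, t < a → (fun u => T u u) =ᶠ[𝓝 t] fun w => Tp a w := by
    intro a t h
    filter_upwards [Iio_mem_nhds h] with u hu
    exact (hTpS a u (le_of_lt hu)).symm
  have hS1 : ∀ a t : ℝ, t < a → HasDerivAt (fun u => T u u) (Gp a t) t :=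
    fun a t h => (hGp a t).congr_of_eventuallyEq (hSev a t h)
  have hSdev : ∀ a t : ℝ, t < a →
      (deriv fun u => T u u) =ᶠ[𝓝 t] fun w => Gp a w := by
    intro a t h
    filter_upwards [Iio_mem_nhds h] with u hu
    exact (hS1 a u hu).deriv
  have hS2 : ∀ a t : ℝ, t < a → HasDerivAt (deriv fun u => T u u) (Hp a t) t :=
    fun a t h => (hHp a t).congr_of_eventuallyEq (hSdev a t h)
  have hHdiag : ∀ t : ℝ, Hp t t = Hp (t + 1) t := by
    intro t
    have h1 : Tendsto (fun s => Hp s t) (𝓝[>] t) (𝓝 (Hp t t)) := by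
      have hcomp : Tendsto (fun s : ℝ => (s, t)) (𝓝 t) (𝓝 (t, t)) :=
        ((continuous_id.prodMk continuous_const).tendsto t)
      exact ((hHpc.tendsto (t, t)).comp hcomp).mono_left nhdsWithin_le_nhds
    have h2 : Tendsto (fun s => Hp s t) (𝓝[>] t) (𝓝 (Hp (t + 1) t)) := by
      refine Tendsto.congr' ?_ tendsto_const_nhds
      filter_upwards [self_mem_nhdsWithin] with s hs
      exact (hS2 (t + 1) t (lt_add_one t)).unique (hS2 s t hs)
    exact tendsto_nhds_unique h1 h2
  intro t
  constructor
  · rw [hderp t t, hHdiag t]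
    exact hS2 (t + 1) t (lt_add_one t)
  · rw [hderp t t, hderm t t]
    -- goal: Hm t t ≤ Hp t t
    have hφdiff : Differentiable ℝ (fun u => T t u) := by
      have h0 : Differentiable ℝ (fun p : ℝ × ℝ => T p.1 p.2) := hT.differentiable one_ne_zero
      exact h0.comp ((differentiable_const t).prodMk differentiable_id)
    set dφ := deriv (fun u => T t u) t with hdφ
    have hφ : HasDerivAt (fun u => T t u) dφ t := (hφdiff t).hasDerivAt
    have hu1 : UniqueDiffWithinAt ℝ (Iic t) t := uniqueDiffOn_Iic t t (mem_Iic.mpr le_rfl)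
    have hu2 : UniqueDiffWithinAt ℝ (Ici t) t := uniqueDiffOn_Ici t t (mem_Ici.mpr le_rfl)
    have hw1 : HasDerivWithinAt (fun u => T t u) (Gp (t + 1) t) (Iic t) t := by
      refine (hS1 (t + 1) t (lt_add_one t)).hasDerivWithinAt.congr ?_ (by rfl)
      intro y hy
      exact hconst t y hy
    have e1 : Gp (t + 1) t = dφ := by
      calc Gp (t + 1) t = derivWithin (fun u => T t u) (Iic t) t := (hw1.derivWithin hu1).symm
        _ = dφ := hφ.hasDerivWithinAt.derivWithin hu1
    have hw2 : HasDerivWithinAt (fun u => T t u) (Gm t t) (Ici t) t := by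
      refine (hGm t t).hasDerivWithinAt.congr ?_ (hTmeq t t le_rfl).symm
      intro y hy
      exact (hTmeq t y hy).symm
    have e2 : Gm t t = dφ := by
      calc Gm t t = derivWithin (fun u => T t u) (Ici t) t := (hw2.derivWithin hu2).symm
        _ = dφ := hφ.hasDerivWithinAt.derivWithin hu2
    set ψ : ℝ → ℝ := fun u => T u u - Tm t u with hψdef
    have hψd : ∀ u, HasDerivAt ψ (Gp (u + 1) u - Gm t u) u :=
      fun u => (hS1 (u + 1) u (lt_add_one u)).sub (hGm t u)
    have hψdiff : Differentiable ℝ ψ := fun u => (hψd u).differentiableAt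
    have hψderiv : ∀ u, deriv ψ u = Gp (u + 1) u - Gm t u := fun u => (hψd u).deriv
    have hψ'0 : deriv ψ t = 0 := by rw [hψderiv t, e1, e2, sub_self]
    have hψev : deriv ψ =ᶠ[𝓝 t] fun u => Gp (t + 1) u - Gm t u := by
      filter_upwards [Iio_mem_nhds (lt_add_one t)] with u hu
      rw [hψderiv u]
      have : Gp (u + 1) u = Gp (t + 1) u :=
        (hS1 (u + 1) u (lt_add_one u)).unique (hS1 (t + 1) u hu)
      rw [this]
    have hψ'' : HasDerivAt (deriv ψ) (Hp (t + 1) t - Hm t t) t :=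
      ((hHp (t + 1) t).sub (hHm t t)).congr_of_eventuallyEq hψev
    by_contra hlt
    push_neg at hlt
    have hc : Hp (t + 1) t - Hm t t < 0 := by
      have := hHdiag t
      linarith [hlt, this.symm ▸ hlt]
    have hslope := hasDerivAt_iff_tendsto_slope.mp hψ''
    have hslope' : Tendsto (slope (deriv ψ) t) (𝓝[>] t) (𝓝 (Hp (t + 1) t - Hm t t)) :=
      hslope.mono_left (nhdsWithin_mono t (fun x hx => ne_of_gt hx))
    have hev : ∀ᶠ u in 𝓝[>] t, slope (deriv ψ) t u < 0 :=
      hslope'.eventually (gt_mem_nhds hc)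
    have hev' : ∀ᶠ u in 𝓝[>] t, deriv ψ u < 0 := by
      filter_upwards [hev, self_mem_nhdsWithin] with u h1 h2
      have hs : slope (deriv ψ) t u = deriv ψ u / (u - t) := by
        rw [slope_def_field, hψ'0, sub_zero]
      rw [hs] at h1
      have hupos : 0 < u - t := sub_pos.mpr h2
      rcases div_neg_iff.mp h1 with ⟨_, h⟩ | ⟨h, _⟩
      · linarith
      · exact h
    obtain ⟨b, hb, hsub⟩ := mem_nhdsGT_iff_exists_Ioo_subset.mp hev'
    have hanti : StrictAntiOn ψ (Icc t b) := by
      apply strictAntiOn_of_deriv_neg (convex_Icc t b) hψdiff.continuous.continuousOn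
      intro x hx
      rw [interior_Icc] at hx
      exact hsub hx
    have h1 : ψ b < ψ t :=
      hanti (left_mem_Icc.mpr (le_of_lt hb)) (right_mem_Icc.mpr (le_of_lt hb)) hb
    have h2 : ψ t = 0 := by
      simp only [hψdef]
      rw [hTmeq t t le_rfl, sub_self]
    have h3 : 0 ≤ ψ b := by
      simp only [hψdef]
      have := hmono b (le_of_lt hb)
      rw [hTmeq t b (le_of_lt hb)]
      simpa using sub_nonneg.mpr this
    linarith
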